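/- Let P ⊆ {x ∈ ℝ^N : x_N ≥ 0} be an unbounded polyhedron with positive N-dimensional Lebesgue measure such that M := P ∩ {x ∈ ℝ^N : x_N = 0} is nonempty and bounded. Then for every δ > 0 there exists a constant C > 0 such that S_P(t) ≤ C t^{N−1} for all t ≥ δ. -/

import Mathlib

open MeasureTheory Bornology Filter Pointwise

lemma ray_of_unbounded {E : Type*} [NormedAddCommGroup E] [NormedSpace ℝ E]
    [FiniteDimensional ℝ E] {C : Set E} (hC : Convex ℝ C) (hcl : IsClosed C)
    {c : E} (hc : c ∈ C) (hub : ¬ IsBounded C) :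
    ∃ v : E, ‖v‖ = 1 ∧ ∀ s : ℝ, 0 ≤ s → c + s • v ∈ C := by
  rw [isBounded_iff_forall_norm_le] at hub
  push_neg at hub
  choose y hyC hy using fun k : ℕ => hub (‖c‖ + k + 1)
  have hnorm : ∀ k : ℕ, (k : ℝ) + 1 ≤ ‖y k - c‖ := by
    intro k
    have := hy k
    have h2 := norm_sub_norm_le (y k) c
    linarith [norm_sub_rev (y k) c ▸ h2]
  have hpos : ∀ k : ℕ, 0 < ‖y k - c‖ := fun k => by
    have h := hnorm k
    have : (0:ℝ) ≤ (k:ℝ) := Nat.cast_nonneg k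
    linarith
  set u : ℕ → E := fun k => ‖y k - c‖⁻¹ • (y k - c) with hu
  have humem : ∀ k, u k ∈ Metric.sphere (0 : E) 1 := by
    intro k
    simp only [Metric.mem_sphere, dist_zero_right, hu, norm_smul, norm_inv, norm_norm]
    rw [inv_mul_cancel₀ (hpos k).ne']
  obtain ⟨v, hvmem, φ, hφ, hφt⟩ := (isCompact_sphere (0 : E) 1).tendsto_subseq humem
  refine ⟨v, by simpa using hvmem, fun s hs => ?_⟩
  have hmemseq : ∀ᶠ k in atTop, c + s • (u ∘ φ) k ∈ C := by
    filter_upwards [eventually_ge_atTop ⌈s⌉₊] with k hk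
    have hle : s ≤ ‖y (φ k) - c‖ := by
      have h1 : (k : ℝ) + 1 ≤ ‖y (φ k) - c‖ := by
        have := hnorm (φ k)
        have : (k : ℝ) ≤ φ k := Nat.cast_le.mpr hφ.le_apply
        linarith [hnorm (φ k)]
      have h2 : s ≤ (⌈s⌉₊ : ℝ) := Nat.le_ceil s
      have h3 : (⌈s⌉₊ : ℝ) ≤ k := Nat.cast_le.mpr hk
      linarith
    set j := φ k
    set lam := s / ‖y j - c‖ with hlam
    have hlam0 : 0 ≤ lam := div_nonneg hs (hpos j).le
    have hlam1 : lam ≤ 1 := (div_le_one (hpos j)).mpr hle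
    have hmem := hC hc (hyC j) (by linarith : (0:ℝ) ≤ 1 - lam) hlam0 (by ring)
    have : (1 - lam) • c + lam • y j = c + s • (u ∘ φ) k := by
      show (1 - lam) • c + lam • y j = c + s • (‖y j - c‖⁻¹ • (y j - c))
      rw [hlam, div_eq_mul_inv]
      module
    rwa [this] at hmem
  refine hcl.mem_of_tendsto ?_ hmemseq
  exact (hφt.const_smul s).const_add c


/-- Let `P ⊆ {x ∈ ℝ^N : x_N ≥ 0}` (here `N = n+1`) be an unbounded polyhedron
of positive `N`-dimensional Lebesgue measure whose base `M = P ∩ {x_N = 0}` is nonempty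
and bounded. Then for every `δ > 0` there is `C > 0` with `S_P(t) ≤ C t^{N−1}` for all
`t ≥ δ`, where `S_P(t)` is the `(N−1)`-dimensional measure of the slice of `P` at height `t`. -/
theorem stmt11 (n : ℕ) (P : Set (Fin (n+1) → ℝ))
    (hpoly : ∃ (m : ℕ) (g : Fin m → ((Fin (n+1) → ℝ) →ᵃ[ℝ] ℝ)),
      P = ⋂ i, {x | g i x ≤ 0})
    (hPsub : ∀ x ∈ P, 0 ≤ x (Fin.last n))
    (hunbd : ¬ Bornology.IsBounded P)
    (hvol : 0 < volume P)
    (hMne : (P ∩ {x | x (Fin.last n) = 0}).Nonempty)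
    (hMbd : Bornology.IsBounded (P ∩ {x | x (Fin.last n) = 0})) :
    ∀ δ : ℝ, 0 < δ → ∃ C : ℝ, 0 < C ∧ ∀ t : ℝ, δ ≤ t →
      volume {x' : Fin n → ℝ | Fin.snoc x' t ∈ P} ≤ ENNReal.ofReal (C * t ^ n) := by
  obtain ⟨m, g, hPg⟩ := hpoly
  obtain ⟨x₀, hx₀P, hx₀0⟩ := hMne
  have hmemP : ∀ x, x ∈ P ↔ ∀ i, g i x ≤ 0 := by
    intro x; rw [hPg]; simp [Set.mem_iInter]
  have hPconv : Convex ℝ P := by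
    rw [hPg]; exact convex_iInter fun i => (convex_Iic (0:ℝ)).affine_preimage (g i)
  have hPclosed : IsClosed P := by
    rw [hPg]
    exact isClosed_iInter fun i =>
      (isClosed_Iic).preimage (g i).continuous_of_finiteDimensional
  intro δ hδ
  set B : Set (Fin n → ℝ) := {x' | Fin.snoc x' δ ∈ P} with hB
  have hsnoc_comb : ∀ (a b : ℝ) (x' y' : Fin n → ℝ) (s t : ℝ),
      (Fin.snoc (a • x' + b • y') (a*s + b*t) : Fin (n+1) → ℝ)
        = a • (Fin.snoc x' s : Fin (n+1) → ℝ) + b • (Fin.snoc y' t : Fin (n+1) → ℝ) := by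
    intro a b x' y' s t
    funext i
    refine Fin.lastCases ?_ ?_ i
    · simp
    · intro i; simp
  have hsnoc_cont : ∀ c : ℝ,
      Continuous (fun x' : Fin n → ℝ => (Fin.snoc x' c : Fin (n+1) → ℝ)) := by
    intro c
    refine continuous_pi fun i => ?_
    refine Fin.lastCases ?_ ?_ i
    · simpa using continuous_const
    · intro i; simpa using continuous_apply i
  have hBclosed : IsClosed B := hPclosed.preimage (hsnoc_cont δ)
  have hBconv : Convex ℝ B := by
    intro x' hx' y' hy' a b ha hb hab
    show Fin.snoc (a • x' + b • y') δ ∈ P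
    have hδab : δ = a * δ + b * δ := by rw [← add_mul, hab, one_mul]
    rw [hδab, hsnoc_comb]
    exact hPconv hx' hy' ha hb hab
  -- snoc additivity along a ray
  have hsnocadd : ∀ (c v : Fin n → ℝ) (s : ℝ),
      (Fin.snoc (c + s • v) δ : Fin (n+1) → ℝ)
        = Fin.snoc c δ + s • (Fin.snoc v 0 : Fin (n+1) → ℝ) := by
    intro c v s
    funext i
    refine Fin.lastCases ?_ ?_ i
    · simp
    · intro i; simp
  -- B has finite volume
  have hBfin : volume B ≠ ⊤ := by
    by_cases hbd : Bornology.IsBounded B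
    · exact hbd.measure_lt_top.ne
    exfalso
    have hBne : B.Nonempty := by
      rcases B.eq_empty_or_nonempty with h | h
      · exact absurd (h ▸ Bornology.isBounded_empty) hbd
      · exact h
    obtain ⟨c, hc⟩ := hBne
    obtain ⟨v, hv1, hray⟩ := ray_of_unbounded hBconv hBclosed hc hbd
    set w : Fin (n+1) → ℝ := Fin.snoc v 0 with hw
    have hwlast : w (Fin.last n) = 0 := by simp [hw]
    have haff : ∀ (i : Fin m) (p : Fin (n+1) → ℝ) (s : ℝ),
        g i (p + s • w) = g i p + s * (g i).linear w := by
      intro i p s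
      have h1 : g i (s • w +ᵥ p) = (g i).linear (s • w) +ᵥ g i p := (g i).map_vadd p (s • w)
      simp only [vadd_eq_add, LinearMap.map_smul, smul_eq_mul] at h1
      rw [add_comm p (s • w), h1]
      ring
    have hlin : ∀ i, (g i).linear w ≤ 0 := by
      intro i
      by_contra hL
      push_neg at hL
      set L := (g i).linear w with hLdef
      set s : ℝ := (|g i (Fin.snoc c δ)| + 1) / L with hs
      have hs0 : 0 ≤ s := div_nonneg (by positivity) hL.le
      have hmem : (Fin.snoc (c + s • v) δ : Fin (n+1) → ℝ) ∈ P := hray s hs0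
      rw [hsnocadd] at hmem
      have hle := (hmemP _).mp hmem i
      rw [haff] at hle
      have hsL : s * L = |g i (Fin.snoc c δ)| + 1 := by
        rw [hs]; field_simp
      have habs := neg_abs_le (g i (Fin.snoc c δ))
      linarith
    -- the ray x₀ + s • w is in M, contradicting boundedness of M
    have hwne : w ≠ 0 := by
      intro h
      have hv0 : v = 0 := by
        funext i
        have := congrFun h (Fin.castSucc i)
        simpa [hw] using this
      rw [hv0] at hv1; simp at hv1
    have hwpos : 0 < ‖w‖ := norm_pos_iff.mpr hwne
    obtain ⟨R, hR⟩ := isBounded_iff_forall_norm_le.mp hMbd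
    have hx₀R : ‖x₀‖ ≤ R := hR x₀ ⟨hx₀P, hx₀0⟩
    set s : ℝ := (R + ‖x₀‖ + 1) / ‖w‖ with hsdef
    have hs0 : 0 ≤ s := by
      apply div_nonneg _ hwpos.le
      have := norm_nonneg x₀; linarith
    have hmemM : x₀ + s • w ∈ P ∩ {x | x (Fin.last n) = 0} := by
      constructor
      · rw [hmemP]
        intro i
        rw [haff]
        have h1 := (hmemP _).mp hx₀P i
        have h2 := mul_nonpos_of_nonneg_of_nonpos hs0 (hlin i)
        linarith
      · show (x₀ + s • w) (Fin.last n) = 0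
        have h0 : x₀ (Fin.last n) = 0 := hx₀0
        simp [hwlast, h0]
    have hRle := hR _ hmemM
    have h3 : ‖s • w‖ ≤ ‖x₀ + s • w‖ + ‖x₀‖ := by
      have h := norm_sub_le (x₀ + s • w) x₀
      rwa [add_sub_cancel_left] at h
    have h4 : ‖s • w‖ = R + ‖x₀‖ + 1 := by
      rw [norm_smul, Real.norm_eq_abs, abs_of_nonneg hs0, hsdef]
      field_simp
    linarith
  -- main bound
  set K : ℝ := (volume B).toReal with hK
  have hK0 : 0 ≤ K := ENNReal.toReal_nonneg
  refine ⟨(K + 1) / δ ^ n, by positivity, fun t ht => ?_⟩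
  have ht0 : 0 < t := lt_of_lt_of_le hδ ht
  set r : ℝ := δ / t with hr
  have hr0 : 0 < r := div_pos hδ ht0
  have hr1 : r ≤ 1 := (div_le_one ht0).mpr ht
  set S : Set (Fin n → ℝ) := {x' | Fin.snoc x' t ∈ P} with hS
  set x₀' : Fin n → ℝ := fun i => x₀ (Fin.castSucc i) with hx₀'
  set c₀ : Fin n → ℝ := x₀' - r • x₀' with hc₀
  -- image of S under the homothety lies in B
  have hsub : (fun x' => c₀ + r • x') '' S ⊆ B := by
    rintro _ ⟨x', hx', rfl⟩
    show (Fin.snoc (c₀ + r • x') δ : Fin (n+1) → ℝ) ∈ P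
    have hkey : (Fin.snoc (c₀ + r • x') δ : Fin (n+1) → ℝ)
        = (1 - r) • x₀ + r • (Fin.snoc x' t : Fin (n+1) → ℝ) := by
      funext i
      refine Fin.lastCases ?_ ?_ i
      · have : ((1 - r) • x₀ + r • (Fin.snoc x' t : Fin (n+1) → ℝ)) (Fin.last n)
            = (1 - r) * x₀ (Fin.last n) + r * t := by simp
        rw [this, hx₀0, hr]
        field_simp
        simp only [Fin.snoc_last]
        ring
      · intro i
        simp [hc₀, hx₀']
        ring
    rw [hkey]
    exact hPconv hx₀P hx' (by linarith) hr0.le (by ring)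
  have himg : (fun x' => c₀ + r • x') '' S = c₀ +ᵥ ((r • S : Set (Fin n → ℝ))) := by
    rw [← Set.image_smul, ← Set.image_vadd, Set.image_image]
    rfl
  have hfr : Module.finrank ℝ (Fin n → ℝ) = n := by simp
  have hmeas : ENNReal.ofReal (r ^ n) * volume S ≤ volume B := by
    have h1 := measure_mono (μ := volume) hsub
    rw [himg, measure_vadd, Measure.addHaar_smul, hfr,
      abs_of_pos (pow_pos hr0 n)] at h1
    exact h1
  have hne0 : ENNReal.ofReal (r ^ n) ≠ 0 := by
    simp [ENNReal.ofReal_eq_zero, not_le, pow_pos hr0 n]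
  have hnetop : ENNReal.ofReal (r ^ n) ≠ ⊤ := ENNReal.ofReal_ne_top
  rw [← ENNReal.mul_le_mul_iff_right hne0 hnetop]
  calc ENNReal.ofReal (r ^ n) * volume S ≤ volume B := hmeas
    _ = ENNReal.ofReal K := (ENNReal.ofReal_toReal hBfin).symm
    _ ≤ ENNReal.ofReal (r ^ n * ((K + 1) / δ ^ n * t ^ n)) := by
        apply ENNReal.ofReal_le_ofReal
        have : r ^ n * ((K + 1) / δ ^ n * t ^ n) = K + 1 := by
          rw [hr, div_pow]
          field_simp
        rw [this]; linarith
    _ = ENNReal.ofReal (r ^ n) * ENNReal.ofReal ((K + 1) / δ ^ n * t ^ n) := by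
        rw [ENNReal.ofReal_mul (pow_pos hr0 n).le]
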